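/- Let κ' ≥ 1 and r ≥ 0 be integers, and let N : ℕ × ℕ → ℝ be a function satisfying: N(i, j+1) = 2π(j+1)·N(i, j) for all even i with 0 ≤ i ≤ r and all j ≥ 0; (i + 2κ')·N(i, j) = i·N(i−2, j) for all even i with 2 ≤ i ≤ r and all j ≥ 0; and N(0, r) = 1. Then for every even integer i with 2 ≤ i ≤ r, N(i, r−i) = (2π)^{−i} · ∏_{0 ≤ l ≤ i−2, l even} (i−l) / ((i + 2κ' − l)(r − i + l + 1)(r − i + l + 2)). -/

import Mathlib

set_option maxHeartbeats 1000000 in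
/-- Explicit norm formula for the orthogonal basis of the tensor product model:
if `N : ℕ × ℕ → ℝ` satisfies `N(i, j+1) = 2π(j+1) N(i, j)` (for even `0 ≤ i ≤ r`),
`(i + 2κ') N(i, j) = i · N(i-2, j)` (for even `2 ≤ i ≤ r`), and `N(0, r) = 1`, then for
every even `i` with `2 ≤ i ≤ r`,
`N(i, r-i) = (2π)^{-i} ∏_{0 ≤ l ≤ i-2, l even} (i-l)/((i+2κ'-l)(r-i+l+1)(r-i+l+2))`. -/
theorem tensor_norm_formula (κ' r : ℕ) (hκ' : 1 ≤ κ') (N : ℕ × ℕ → ℝ)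
    (h1 : ∀ i j : ℕ, Even i → i ≤ r →
      N (i, j + 1) = 2 * Real.pi * ((j : ℝ) + 1) * N (i, j))
    (h2 : ∀ i j : ℕ, Even i → 2 ≤ i → i ≤ r →
      ((i : ℝ) + 2 * κ') * N (i, j) = (i : ℝ) * N (i - 2, j))
    (h3 : N (0, r) = 1) :
    ∀ i : ℕ, Even i → 2 ≤ i → i ≤ r →
      N (i, r - i) = (2 * Real.pi) ^ (-(i : ℤ)) *
        ∏ l ∈ (Finset.range (i - 1)).filter (fun l => Even l),
          ((i : ℝ) - l) /
            (((i : ℝ) + 2 * κ' - l) * ((r : ℝ) - i + l + 1) * ((r : ℝ) - i + l + 2)) := by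
  have hπ := Real.pi_pos
  have h2π : (2 * Real.pi) ≠ 0 := by positivity
  set f : ℕ → ℝ := fun m =>
    ((m : ℝ)) / (((m : ℝ) + 2 * κ') * ((r : ℝ) - m + 1) * ((r : ℝ) - m + 2)) with hf
  -- reindexing the filtered product
  have hprod : ∀ n : ℕ, 1 ≤ n →
      (∏ l ∈ (Finset.range (2 * n - 1)).filter (fun l => Even l),
        (((2 * n : ℕ) : ℝ) - l) /
          ((((2 * n : ℕ) : ℝ) + 2 * κ' - l) * ((r : ℝ) - (2 * n : ℕ) + l + 1) *
            ((r : ℝ) - (2 * n : ℕ) + l + 2)))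
      = ∏ k ∈ Finset.range n, f (2 * k + 2) := by
    intro n hn
    have hset : (Finset.range (2 * n - 1)).filter (fun l => Even l)
        = (Finset.range n).image (fun k => 2 * k) := by
      ext a
      simp only [Finset.mem_filter, Finset.mem_range, Finset.mem_image, Nat.even_iff]
      constructor
      · rintro ⟨ha, he⟩
        exact ⟨a / 2, by omega, by omega⟩
      · rintro ⟨k, hk, rfl⟩
        constructor <;> omega
    rw [hset, Finset.prod_image (by intro x _ y _ h; dsimp only at h; omega)]
    have hterm : ∀ k ∈ Finset.range n,
        (((2 * n : ℕ) : ℝ) - ((2 * k : ℕ) : ℝ)) /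
          ((((2 * n : ℕ) : ℝ) + 2 * κ' - ((2 * k : ℕ) : ℝ)) *
            ((r : ℝ) - (2 * n : ℕ) + ((2 * k : ℕ) : ℝ) + 1) *
            ((r : ℝ) - (2 * n : ℕ) + ((2 * k : ℕ) : ℝ) + 2))
        = f (2 * n - 2 * k) := by
      intro k hk
      simp only [Finset.mem_range] at hk
      have hkn : 2 * k ≤ 2 * n := by omega
      simp only [hf]
      rw [Nat.cast_sub hkn]
      push_cast
      ring_nf
    rw [Finset.prod_congr rfl hterm]
    have hrefl := Finset.prod_range_reflect (fun k => f (2 * n - 2 * k)) n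
    rw [← hrefl]
    apply Finset.prod_congr rfl
    intro k hk
    simp only [Finset.mem_range] at hk
    congr 1
    omega
  -- the main induction
  have key : ∀ n : ℕ, 1 ≤ n → 2 * n ≤ r →
      N (2 * n, r - 2 * n) = (2 * Real.pi) ^ (-((2 * n : ℕ) : ℤ)) *
        ∏ k ∈ Finset.range n, f (2 * k + 2) := by
    intro n hn
    induction n, hn using Nat.le_induction with
    | base =>
      intro hr
      have hr2 : 2 ≤ r := by omega
      have e1 := h1 0 (r - 2) (⟨0, rfl⟩) (by omega)
      have e2 := h1 0 (r - 2 + 1) (⟨0, rfl⟩) (by omega)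
      have e3 := h2 2 (r - 2) (by decide) le_rfl (by omega)
      have hnat : r - 2 + 1 + 1 = r := by omega
      rw [hnat] at e2
      have hc : ((r - 2 : ℕ) : ℝ) = (r : ℝ) - 2 := by
        rw [Nat.cast_sub hr2]; norm_num
      have hc'' : ((r - 2 + 1 : ℕ) : ℝ) = (r : ℝ) - 1 := by
        push_cast [hc]; ring
      rw [h3, e1, hc, hc''] at e2
      push_cast [hc] at e3 ⊢
      have hr1 : (0:ℝ) < (r : ℝ) - 1 := by
        have : (2:ℝ) ≤ (r:ℝ) := by exact_mod_cast hr2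
        linarith
      have hrpos : (0:ℝ) < (r : ℝ) := by linarith
      have hκpos : (0:ℝ) < (2 : ℝ) + 2 * κ' := by positivity
      rw [Finset.prod_range_one]
      simp only [hf]
      push_cast
      have hN0 : N (0, r - 2) = 1 / ((2 * Real.pi) ^ 2 * ((r:ℝ) - 1) * (r:ℝ)) := by
        rw [eq_div_iff (by positivity)]
        linear_combination (-1 : ℝ) * e2
      have hval : N (2, r - 2) = 2 * N (0, r - 2) / ((2:ℝ) + 2 * κ') := by
        rw [eq_div_iff (ne_of_gt hκpos)]
        linarith [e3]
      rw [hval, hN0]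
      have hpow : (2 * Real.pi) ^ (-2 : ℤ) = ((2 * Real.pi) ^ 2)⁻¹ := by
        rw [zpow_neg]; norm_cast
      rw [hpow]
      have d1 : (r:ℝ) - 2 + 1 ≠ 0 := by intro h; nlinarith
      have d2 : (r:ℝ) - 2 + 2 ≠ 0 := by intro h; nlinarith
      have d3 : (r:ℝ) - 1 ≠ 0 := ne_of_gt hr1
      have d4 : (r:ℝ) ≠ 0 := ne_of_gt hrpos
      have d5 : (2:ℝ) + 2 * κ' ≠ 0 := ne_of_gt hκpos
      field_simp
      ring
    | succ n hn ih =>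
      intro hr
      have hr' : 2 * n ≤ r := by omega
      have ihv := ih hr'
      have heven : Even (2 * n) := even_two_mul n
      have e1 := h1 (2 * n) (r - (2 * n + 2)) heven (by omega)
      have e2 := h1 (2 * n) (r - (2 * n + 2) + 1) heven (by omega)
      have e3 := h2 (2 * n + 2) (r - (2 * n + 2)) ⟨n + 1, by ring⟩ (by omega) (by omega)
      have hnat : r - (2 * n + 2) + 1 + 1 = r - 2 * n := by omega
      rw [hnat] at e2
      rw [e2, e1] at ihv
      have hnat2 : 2 * n + 2 - 2 = 2 * n := by omega
      rw [hnat2] at e3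
      have hc : ((r - (2 * n + 2) : ℕ) : ℝ) = (r : ℝ) - 2 * n - 2 := by
        rw [Nat.cast_sub (by omega)]; push_cast; ring
      have hc' : ((r - (2 * n + 2) + 1 : ℕ) : ℝ) = (r : ℝ) - 2 * n - 1 := by
        push_cast [hc]; ring
      rw [hc, hc'] at ihv
      have hc1 : (0:ℝ) < (r : ℝ) - 2 * n - 1 := by
        have : (2 * (n:ℝ) + 2 : ℝ) ≤ (r : ℝ) := by exact_mod_cast hr
        linarith
      have hc2 : (0:ℝ) < (r : ℝ) - 2 * n := by linarith
      have hκpos : (0:ℝ) < ((2 * n + 2 : ℕ) : ℝ) + 2 * κ' := by positivity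
      set A := N (2 * n, r - (2 * n + 2)) with hA
      set Q := ∏ k ∈ Finset.range n, f (2 * k + 2) with hQ
      set P := (2 * Real.pi) ^ (-((2 * n : ℕ) : ℤ)) with hP
      have hBval : N (2 * n + 2, r - (2 * n + 2))
          = (((2 * n + 2 : ℕ) : ℝ) * A) / (((2 * n + 2 : ℕ) : ℝ) + 2 * κ') := by
        rw [eq_div_iff (ne_of_gt hκpos)]
        linear_combination e3
      have hAval : A = (P * Q) /
          ((2 * Real.pi * ((r : ℝ) - 2 * n - 1)) * (2 * Real.pi * ((r : ℝ) - 2 * n))) := by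
        rw [eq_div_iff (by positivity)]
        linear_combination ihv
      have hpow : (2 * Real.pi) ^ (-((2 * (n + 1) : ℕ) : ℤ))
          = P * ((2 * Real.pi) ^ 2)⁻¹ := by
        rw [hP, show (-((2 * (n + 1) : ℕ) : ℤ)) = (-((2 * n : ℕ) : ℤ)) + (-2 : ℤ) by
          push_cast; ring, zpow_add₀ h2π, zpow_neg]
        norm_cast
      show N (2 * n + 2, r - (2 * n + 2)) = _
      rw [Finset.prod_range_succ, hBval, hAval, hpow, ← hQ]
      simp only [hf]
      have hπ' : Real.pi ≠ 0 := ne_of_gt hπ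
      have d1 : (r:ℝ) - 2 * n - 1 ≠ 0 := ne_of_gt hc1
      have d2 : (r:ℝ) - 2 * n ≠ 0 := ne_of_gt hc2
      have d3 : ((2 * n + 2 : ℕ) : ℝ) + 2 * κ' ≠ 0 := ne_of_gt hκpos
      have d4 : 2 * (n:ℝ) + 2 + 2 * κ' ≠ 0 := by push_cast at d3 ⊢; linarith [d3]
      have d5 : (r:ℝ) - (2 * (n:ℝ) + 2) + 1 ≠ 0 := by
        intro h; apply d1; linarith
      have d6 : (r:ℝ) - (2 * (n:ℝ) + 2) + 2 ≠ 0 := by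
        intro h; apply d2; linarith
      push_cast
      field_simp
      have hinv : (-(r:ℝ) - r*n*4 + r^2 + n*2 + n^2*4)⁻¹ * (-(r:ℝ) - r*n*4 + r^2 + n*2 + n^2*4) = 1 :=
        inv_mul_cancel₀ (by intro h; apply mul_ne_zero d1 d2; linear_combination h)
      linear_combination (-(P*Q)) * hinv
  -- conclude
  intro i hi h2i hir
  have hi2 : i % 2 = 0 := Nat.even_iff.mp hi
  obtain ⟨n, rfl⟩ : ∃ n, i = 2 * n := ⟨i / 2, by omega⟩
  have hn : 1 ≤ n := by omega
  rw [key n hn hir, hprod n hn]
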